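/- For every iteration index t ≥ 0, every solar state z, every channel state x, and every battery level y with 1 ≤ y ≤ N_B−2, the function Λ_t is non-increasing in the battery level: Λ_t(z,x,y+1) ≤ Λ_t(z,x,y). -/

import Mathlib

/-!
On-off energy-harvesting MDP value iteration.
`Va` is the one-step action-value operator, `Viter i` is the `i`-th value-iteration
function `V_i`, and `VIa i a` is the action-value function `V_i^a`.
-/

/-- The one-step action-value operator:
`Va NB aH pC pQ r lam V a z x y = a·r(x) + λ·Σ_j Σ_l Σ'_q aH(z,j)·pC(x,l)·pQ(z,q)·
V(j, l, min{N_B−1, y−a+q})`. -/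
noncomputable def Va {NH NC : ℕ} (NB : ℕ) (aH : Fin NH → Fin NH → ℝ)
    (pC : Fin NC → Fin NC → ℝ) (pQ : Fin NH → ℕ → ℝ) (r : Fin NC → ℝ) (lam : ℝ)
    (V : Fin NH → Fin NC → ℕ → ℝ) (a : ℕ) (z : Fin NH) (x : Fin NC) (y : ℕ) : ℝ :=
  a * r x + lam * ∑ j : Fin NH, ∑ l : Fin NC,
    ∑' q : ℕ, aH z j * pC x l * pQ z q * V j l (min (NB - 1) (y - a + q))

/-- Value iteration: `V_0 = 0` and `V_{i+1}(z,x,y) = max_{0 ≤ a ≤ min{y,1}} V_{i+1}^a(z,x,y)`. -/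
noncomputable def Viter {NH NC : ℕ} (NB : ℕ) (aH : Fin NH → Fin NH → ℝ)
    (pC : Fin NC → Fin NC → ℝ) (pQ : Fin NH → ℕ → ℝ) (r : Fin NC → ℝ) (lam : ℝ) :
    ℕ → Fin NH → Fin NC → ℕ → ℝ
  | 0 => fun _ _ _ => 0
  | (i + 1) => fun z x y =>
      (Finset.range (min y 1 + 1)).sup' Finset.nonempty_range_add_one
        (fun a => Va NB aH pC pQ r lam (Viter NB aH pC pQ r lam i) a z x y)

/-- Action-value iteration: `V_0^a = 0` and `V_{i+1}^a` is `Va` applied to `V_i`. -/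
noncomputable def VIa {NH NC : ℕ} (NB : ℕ) (aH : Fin NH → Fin NH → ℝ)
    (pC : Fin NC → Fin NC → ℝ) (pQ : Fin NH → ℕ → ℝ) (r : Fin NC → ℝ) (lam : ℝ) :
    ℕ → ℕ → Fin NH → Fin NC → ℕ → ℝ
  | 0 => fun _ _ _ _ => 0
  | (i + 1) => fun a z x y => Va NB aH pC pQ r lam (Viter NB aH pC pQ r lam i) a z x y

/-- The difference function `Θ_i(z,x,y) = V_i^1(z,x,y) − V_i^0(z,x,y)`. -/
noncomputable def Theta {NH NC : ℕ} (NB : ℕ) (aH : Fin NH → Fin NH → ℝ)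
    (pC : Fin NC → Fin NC → ℝ) (pQ : Fin NH → ℕ → ℝ) (r : Fin NC → ℝ) (lam : ℝ)
    (i : ℕ) (z : Fin NH) (x : Fin NC) (y : ℕ) : ℝ :=
  VIa NB aH pC pQ r lam i 1 z x y - VIa NB aH pC pQ r lam i 0 z x y

/-- The difference function
`Λ_i(z,x,y) = Σ_j Σ_l Σ'_q aH(z,j)·pC(x,l)·pQ(z,q)·
( V_i^1(j,l,min{N_B−1,y+q}) − V_i^0(j,l,min{N_B−1,y−1+q}) )`. -/
noncomputable def Lambda {NH NC : ℕ} (NB : ℕ) (aH : Fin NH → Fin NH → ℝ)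
    (pC : Fin NC → Fin NC → ℝ) (pQ : Fin NH → ℕ → ℝ) (r : Fin NC → ℝ) (lam : ℝ)
    (i : ℕ) (z : Fin NH) (x : Fin NC) (y : ℕ) : ℝ :=
  ∑ j : Fin NH, ∑ l : Fin NC, ∑' q : ℕ,
    aH z j * pC x l * pQ z q *
      (VIa NB aH pC pQ r lam i 1 j l (min (NB - 1) (y + q)) -
        VIa NB aH pC pQ r lam i 0 j l (min (NB - 1) (y - 1 + q)))

section AuxLemmas

variable {NH NC : ℕ}

/-- A value of `f` at a clipped battery level is bounded by the sum of absolute values. -/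
lemma abs_min_le (NB : ℕ) (hNB : 1 ≤ NB) (f : ℕ → ℝ) (n : ℕ) :
    |f (min (NB - 1) n)| ≤ ∑ m ∈ Finset.range NB, |f m| := by
  refine Finset.single_le_sum (f := fun m => |f m|) (fun m _ => abs_nonneg _) ?_
  exact Finset.mem_range.mpr (by omega)

/-- Summability of `pQ`-weighted bounded sequences. -/
lemma summable_pQ_bounded (pQ : Fin NH → ℕ → ℝ)
    (hpQ : ∀ z q, 0 ≤ pQ z q) (hpQsummable : ∀ z, Summable (pQ z))
    (z : Fin NH) (k : ℝ) {g : ℕ → ℝ} (C : ℝ) (hg : ∀ q, |g q| ≤ C) :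
    Summable fun q => k * pQ z q * g q := by
  apply Summable.of_norm
  refine Summable.of_nonneg_of_le (fun q => norm_nonneg _)
    (fun q => ?_) ((hpQsummable z).mul_right (|k| * C))
  rw [Real.norm_eq_abs, abs_mul, abs_mul, abs_of_nonneg (hpQ z q)]
  calc |k| * pQ z q * |g q| ≤ |k| * pQ z q * C :=
        mul_le_mul_of_nonneg_left (hg q)
          (mul_nonneg (abs_nonneg k) (hpQ z q))
    _ = pQ z q * (|k| * C) := by ring

/-- `Va` is monotone in the battery level, whenever `V` is. -/
lemma Va_mono (NB : ℕ) (hNB : 1 ≤ NB) (aH : Fin NH → Fin NH → ℝ)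
    (pC : Fin NC → Fin NC → ℝ) (pQ : Fin NH → ℕ → ℝ) (r : Fin NC → ℝ) (lam : ℝ)
    (haH : ∀ z j, 0 ≤ aH z j) (hpC : ∀ x l, 0 ≤ pC x l)
    (hpQ : ∀ z q, 0 ≤ pQ z q) (hpQsummable : ∀ z, Summable (pQ z)) (hlam0 : 0 ≤ lam)
    (V : Fin NH → Fin NC → ℕ → ℝ)
    (hV : ∀ j l y y', y ≤ y' → V j l y ≤ V j l y')
    (a : ℕ) (z : Fin NH) (x : Fin NC) {y y' : ℕ} (h : y ≤ y') :
    Va NB aH pC pQ r lam V a z x y ≤ Va NB aH pC pQ r lam V a z x y' := by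
  unfold Va
  apply add_le_add_right
  refine mul_le_mul_of_nonneg_left ?_ hlam0
  refine Finset.sum_le_sum fun j _ => Finset.sum_le_sum fun l _ => ?_
  refine Summable.tsum_le_tsum (fun q => ?_) ?_ ?_
  · refine mul_le_mul_of_nonneg_left ?_
      (mul_nonneg (mul_nonneg (haH z j) (hpC x l)) (hpQ z q))
    exact hV j l _ _ (by omega)
  · exact summable_pQ_bounded pQ hpQ hpQsummable z _
      (∑ m ∈ Finset.range NB, |V j l m|)
      (fun q => abs_min_le NB hNB (fun n => V j l n) _)
  · exact summable_pQ_bounded pQ hpQ hpQsummable z _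
      (∑ m ∈ Finset.range NB, |V j l m|)
      (fun q => abs_min_le NB hNB (fun n => V j l n) _)

/-- `Viter` is monotone in the battery level. -/
lemma Viter_mono (NB : ℕ) (hNB : 1 ≤ NB) (aH : Fin NH → Fin NH → ℝ)
    (pC : Fin NC → Fin NC → ℝ) (pQ : Fin NH → ℕ → ℝ) (r : Fin NC → ℝ) (lam : ℝ)
    (haH : ∀ z j, 0 ≤ aH z j) (hpC : ∀ x l, 0 ≤ pC x l)
    (hpQ : ∀ z q, 0 ≤ pQ z q) (hpQsummable : ∀ z, Summable (pQ z)) (hlam0 : 0 ≤ lam)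
    (i : ℕ) : ∀ (z : Fin NH) (x : Fin NC) (y y' : ℕ), y ≤ y' →
      Viter NB aH pC pQ r lam i z x y ≤ Viter NB aH pC pQ r lam i z x y' := by
  induction i with
  | zero => intro z x y y' h; simp [Viter]
  | succ i ih =>
    intro z x y y' h
    simp only [Viter]
    apply Finset.sup'_le
    intro a ha
    have ha' : a ∈ Finset.range (min y' 1 + 1) := by
      simp only [Finset.mem_range] at ha ⊢; omega
    refine le_trans ?_ (Finset.le_sup' _ ha')
    exact Va_mono NB hNB aH pC pQ r lam haH hpC hpQ hpQsummable hlam0 _ ih a z x h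

/-- Rewriting `Va` with action 1 as reward plus `Va` with action 0. -/
lemma Va_one (NB : ℕ) (aH : Fin NH → Fin NH → ℝ)
    (pC : Fin NC → Fin NC → ℝ) (pQ : Fin NH → ℕ → ℝ) (r : Fin NC → ℝ) (lam : ℝ)
    (V : Fin NH → Fin NC → ℕ → ℝ) (z : Fin NH) (x : Fin NC) (y : ℕ) :
    Va NB aH pC pQ r lam V 1 z x y = r x + Va NB aH pC pQ r lam V 0 z x (y - 1) := by
  simp [Va]

/-- Key pointwise inequality for the `W` function. -/
lemma W_le (NB : ℕ) (hNB : 2 ≤ NB) (aH : Fin NH → Fin NH → ℝ)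
    (pC : Fin NC → Fin NC → ℝ) (pQ : Fin NH → ℕ → ℝ) (r : Fin NC → ℝ) (lam : ℝ)
    (haH : ∀ z j, 0 ≤ aH z j) (hpC : ∀ x l, 0 ≤ pC x l)
    (hpQ : ∀ z q, 0 ≤ pQ z q) (hpQsummable : ∀ z, Summable (pQ z)) (hlam0 : 0 ≤ lam)
    (i : ℕ) (j : Fin NH) (l : Fin NC) (m m' : ℕ) (hm : m ≤ m') (hm' : m' ≤ NB - 1) :
    Va NB aH pC pQ r lam (Viter NB aH pC pQ r lam i) 1 j l (min (NB - 1) (m' + 1)) -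
      Va NB aH pC pQ r lam (Viter NB aH pC pQ r lam i) 0 j l m' ≤
    Va NB aH pC pQ r lam (Viter NB aH pC pQ r lam i) 1 j l (min (NB - 1) (m + 1)) -
      Va NB aH pC pQ r lam (Viter NB aH pC pQ r lam i) 0 j l m := by
  rw [Va_one, Va_one]
  by_cases hc : m' ≤ NB - 2
  · have e1 : min (NB - 1) (m' + 1) - 1 = m' := by omega
    have e2 : min (NB - 1) (m + 1) - 1 = m := by omega
    rw [e1, e2]
    linarith
  · have hm'' : m' = NB - 1 := by omega
    subst hm''
    have e1 : min (NB - 1) (NB - 1 + 1) - 1 = NB - 2 := by omega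
    rw [e1]
    by_cases hc2 : m ≤ NB - 2
    · have e2 : min (NB - 1) (m + 1) - 1 = m := by omega
      rw [e2]
      have hmono : Va NB aH pC pQ r lam (Viter NB aH pC pQ r lam i) 0 j l (NB - 2) ≤
          Va NB aH pC pQ r lam (Viter NB aH pC pQ r lam i) 0 j l (NB - 1) :=
        Va_mono NB (by omega) aH pC pQ r lam haH hpC hpQ hpQsummable hlam0 _
          (Viter_mono NB (by omega) aH pC pQ r lam haH hpC hpQ hpQsummable hlam0 i)
          0 j l (by omega)
      linarith
    · have hm2 : m = NB - 1 := by omega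
      subst hm2
      rw [e1]

end AuxLemmas

/-- for every iteration index `t`, solar state `z` and channel state `x`,
the function `Λ_t(z,x,·)` is non-increasing in the battery level on `{1,…,N_B−1}`. -/
theorem lambda_nonincreasing_in_battery {NH NC : ℕ} (NB : ℕ)
    (hNH : 1 ≤ NH) (hNC : 1 ≤ NC) (hNB : 2 ≤ NB)
    (aH : Fin NH → Fin NH → ℝ) (pC : Fin NC → Fin NC → ℝ)
    (pQ : Fin NH → ℕ → ℝ) (r : Fin NC → ℝ) (lam : ℝ)
    (haH : ∀ z j, 0 ≤ aH z j) (haHsum : ∀ z, ∑ j, aH z j = 1)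
    (hpC : ∀ x l, 0 ≤ pC x l) (hpCsum : ∀ x, ∑ l, pC x l = 1)
    (hpQ : ∀ z q, 0 ≤ pQ z q) (hpQsummable : ∀ z, Summable (pQ z))
    (hpQsum : ∀ z, (∑' q, pQ z q) = 1)
    (hr : ∀ x, 0 ≤ r x) (hlam0 : 0 ≤ lam) (hlam1 : lam ≤ 1)
    (t : ℕ) (z : Fin NH) (x : Fin NC) (y : ℕ) (hy1 : 1 ≤ y) (hy2 : y ≤ NB - 2) :
    Lambda NB aH pC pQ r lam t z x (y + 1) ≤ Lambda NB aH pC pQ r lam t z x y := by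
  cases t with
  | zero => simp [Lambda, VIa]
  | succ i =>
    simp only [Lambda, VIa]
    refine Finset.sum_le_sum fun j _ => Finset.sum_le_sum fun l _ => ?_
    set F : ℕ → ℝ :=
      fun n => Va NB aH pC pQ r lam (Viter NB aH pC pQ r lam i) 1 j l n with hF
    set G : ℕ → ℝ :=
      fun n => Va NB aH pC pQ r lam (Viter NB aH pC pQ r lam i) 0 j l n with hG
    have hbound : ∀ (u v : ℕ → ℕ) (q : ℕ),
        |F (min (NB - 1) (u q)) - G (min (NB - 1) (v q))| ≤
          (∑ m ∈ Finset.range NB, |F m|) + ∑ m ∈ Finset.range NB, |G m| := by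
      intro u v q
      calc |F (min (NB - 1) (u q)) - G (min (NB - 1) (v q))|
          ≤ |F (min (NB - 1) (u q))| + |G (min (NB - 1) (v q))| := abs_sub _ _
        _ ≤ _ := add_le_add (abs_min_le NB (by omega) F _) (abs_min_le NB (by omega) G _)
    refine Summable.tsum_le_tsum (fun q => ?_) ?_ ?_
    · refine mul_le_mul_of_nonneg_left ?_
        (mul_nonneg (mul_nonneg (haH z j) (hpC x l)) (hpQ z q))
      have key := W_le NB hNB aH pC pQ r lam haH hpC hpQ hpQsummable hlam0 i j l
        (min (NB - 1) (y - 1 + q)) (min (NB - 1) (y + q)) (by omega) (by omega)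
      have a1 : min (NB - 1) (y + 1 + q) = min (NB - 1) (min (NB - 1) (y + q) + 1) := by
        omega
      have a2 : min (NB - 1) (y + 1 - 1 + q) = min (NB - 1) (y + q) := by omega
      have a3 : min (NB - 1) (y + q) = min (NB - 1) (min (NB - 1) (y - 1 + q) + 1) := by
        omega
      calc F (min (NB - 1) (y + 1 + q)) - G (min (NB - 1) (y + 1 - 1 + q))
          = F (min (NB - 1) (min (NB - 1) (y + q) + 1)) - G (min (NB - 1) (y + q)) := by
            rw [a1, a2]
        _ ≤ F (min (NB - 1) (min (NB - 1) (y - 1 + q) + 1)) -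
              G (min (NB - 1) (y - 1 + q)) := key
        _ = F (min (NB - 1) (y + q)) - G (min (NB - 1) (y - 1 + q)) := by rw [a3]
    · exact summable_pQ_bounded pQ hpQ hpQsummable z _ _
        (hbound (fun q => y + 1 + q) (fun q => y + 1 - 1 + q))
    · exact summable_pQ_bounded pQ hpQ hpQsummable z _ _
        (hbound (fun q => y + q) (fun q => y - 1 + q))
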